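/- Let X be an integrable real-valued random variable on a probability space (Ω, F, P) with E[exp(zX)] < ∞ for all z > 0. Then EVaR_1(X) = E[X]; that is, inf_{z > 0} z⁻¹ · ln(E[exp(zX)]) = E[X], so at risk level β = 1 the Entropic Value-at-Risk reduces to the risk-neutral expectation. -/

import Mathlib

open MeasureTheory

private lemma evar_tendsto_aux (t : ℝ) :
    Filter.Tendsto (fun n : ℕ => (Real.exp ((((n:ℝ)+1)⁻¹) * t) - 1) / (((n:ℝ)+1)⁻¹))
      Filter.atTop (nhds t) := by
  have hd : HasDerivAt (fun z : ℝ => Real.exp (z * t)) t 0 := by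
    have := (hasDerivAt_mul_const (x := (0:ℝ)) t).exp
    simpa using this
  rw [hasDerivAt_iff_tendsto_slope] at hd
  have hz : Filter.Tendsto (fun n : ℕ => ((n:ℝ)+1)⁻¹) Filter.atTop (nhdsWithin 0 {(0:ℝ)}ᶜ) := by
    apply tendsto_nhdsWithin_of_tendsto_nhds_of_eventually_within
    · simpa using tendsto_one_div_add_atTop_nhds_zero_nat (𝕜 := ℝ)
    · exact Filter.Eventually.of_forall fun n => by simp; positivity
  refine (hd.comp hz).congr fun n => ?_
  simp [slope_fun_def_field, Function.comp]

/-- Entropic Value-at-Risk at level `β`: `EVaR_β(X) := inf_{z > 0} z⁻¹ ln (E[exp (z X)] / β)`. -/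
noncomputable def EVaR {Ω : Type*} [MeasurableSpace Ω] (P : Measure Ω) (β : ℝ) (X : Ω → ℝ) : ℝ :=
  ⨅ z : Set.Ioi (0 : ℝ), ((z : ℝ)⁻¹ * Real.log ((∫ ω, Real.exp ((z : ℝ) * X ω) ∂P) / β))

/-- `EVaR_1(X) = E[X]` : at risk level `β = 1` the entropic value-at-risk
`inf_{z > 0} z⁻¹ ln E[exp(z X)]` reduces to the risk-neutral expectation. -/
theorem stmt_14 {Ω : Type*} [MeasurableSpace Ω] (P : Measure Ω) [IsProbabilityMeasure P]
    (X : Ω → ℝ) (hX : Measurable X) (hint : Integrable X P)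
    (hmgf : ∀ z : ℝ, 0 < z → Integrable (fun ω => Real.exp (z * X ω)) P) :
    EVaR P 1 X = ∫ ω, X ω ∂P := by
  set m : ℝ := ∫ ω, X ω ∂P with hm
  -- Jensen lower bound: for z > 0, exp (z*m) ≤ ∫ exp (z X)
  have hjensen : ∀ z : ℝ, 0 < z → Real.exp (z * m) ≤ ∫ ω, Real.exp (z * X ω) ∂P := by
    intro z hz
    have h := (convexOn_exp).map_integral_le (μ := P) (f := fun ω => z * X ω)
      Real.continuous_exp.continuousOn isClosed_univ
      (Filter.Eventually.of_forall fun ω => Set.mem_univ _)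
      (hint.const_mul z) (by simpa [Function.comp_def] using hmgf z hz)
    rwa [integral_const_mul] at h
  have hgpos : ∀ z : ℝ, 0 < z → 0 < ∫ ω, Real.exp (z * X ω) ∂P := fun z hz =>
    lt_of_lt_of_le (Real.exp_pos _) (hjensen z hz)
  -- pointwise lower bound on each term of the infimum
  have hlow : ∀ z : Set.Ioi (0:ℝ),
      m ≤ (z : ℝ)⁻¹ * Real.log ((∫ ω, Real.exp ((z:ℝ) * X ω) ∂P) / 1) := by
    rintro ⟨z, hz⟩
    simp only [div_one]
    have hz' : (0:ℝ) < z := hz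
    have hlog : z * m ≤ Real.log (∫ ω, Real.exp (z * X ω) ∂P) :=
      (Real.le_log_iff_exp_le (hgpos z hz')).mpr (hjensen z hz')
    calc m = z⁻¹ * (z * m) := by field_simp
    _ ≤ z⁻¹ * Real.log (∫ ω, Real.exp (z * X ω) ∂P) := by
        exact mul_le_mul_of_nonneg_left hlog (by positivity)
  have hbdd : BddBelow (Set.range fun z : Set.Ioi (0:ℝ) =>
      (z : ℝ)⁻¹ * Real.log ((∫ ω, Real.exp ((z:ℝ) * X ω) ∂P) / 1)) :=
    ⟨m, by rintro x ⟨z, rfl⟩; exact hlow z⟩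
  refine le_antisymm ?_ (le_ciInf hlow)
  -- upper bound: EVaR ≤ m + ε for every ε > 0
  refine le_of_forall_pos_le_add fun ε hε => ?_
  -- the functions h_z = (exp(zX)-1)/z with z = 1/(n+1)
  set zs : ℕ → ℝ := fun n => ((n:ℝ)+1)⁻¹ with hzs
  have hzpos : ∀ n, 0 < zs n := fun n => by positivity
  have hzle1 : ∀ n, zs n ≤ 1 := fun n => by
    rw [hzs]; rw [inv_le_one_iff₀]; right; linarith [Nat.cast_nonneg (α := ℝ) n]
  have hexp1 : Integrable (fun ω => Real.exp (X ω)) P := by simpa using hmgf 1 one_pos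
  -- pointwise bounds on h_z for 0 < z ≤ 1
  have hpt_low : ∀ (z t : ℝ), 0 < z → t ≤ (Real.exp (z * t) - 1) / z := by
    intro z t hz
    rw [le_div_iff₀ hz]
    nlinarith [Real.add_one_le_exp (z * t)]
  have hpt_high : ∀ (z t : ℝ), 0 < z → z ≤ 1 → (Real.exp (z * t) - 1) / z ≤ Real.exp t - 1 := by
    intro z t hz hz1
    rw [div_le_iff₀ hz]
    have := convexOn_exp.2 (Set.mem_univ t) (Set.mem_univ (0:ℝ)) (le_of_lt hz)
      (by linarith : (0:ℝ) ≤ 1 - z) (by ring)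
    simp only [smul_eq_mul, mul_zero, add_zero, Real.exp_zero, mul_one] at this
    nlinarith
  -- dominated convergence: ∫ h_{zs n} → m
  have htend : Filter.Tendsto (fun n : ℕ => ∫ ω, (Real.exp (zs n * X ω) - 1) / zs n ∂P)
      Filter.atTop (nhds m) := by
    refine tendsto_integral_of_dominated_convergence
      (fun ω => |X ω| + |Real.exp (X ω) - 1|)
      (fun n => (((hX.const_mul _).exp.sub measurable_const).div_const _).aestronglyMeasurable)
      (hint.abs.add ((hexp1.sub (integrable_const 1)).abs)) ?_ ?_
    · intro n
      refine Filter.Eventually.of_forall fun ω => ?_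
      rw [Real.norm_eq_abs, abs_le]
      constructor
      · have h1 := hpt_low (zs n) (X ω) (hzpos n)
        have h2 : -|X ω| ≤ X ω := neg_abs_le _
        have : (0:ℝ) ≤ |Real.exp (X ω) - 1| := abs_nonneg _
        linarith
      · have h1 := hpt_high (zs n) (X ω) (hzpos n) (hzle1 n)
        have h2 : Real.exp (X ω) - 1 ≤ |Real.exp (X ω) - 1| := le_abs_self _
        have : (0:ℝ) ≤ |X ω| := abs_nonneg _
        linarith
    · exact Filter.Eventually.of_forall fun ω => evar_tendsto_aux (X ω)
  -- pick n with ∫ h_{zs n} < m + ε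
  have : ∀ᶠ n in Filter.atTop,
      (∫ ω, (Real.exp (zs n * X ω) - 1) / zs n ∂P) < m + ε :=
    htend.eventually_lt_const (by linarith)
  obtain ⟨n, hn⟩ := this.exists
  -- EVaR ≤ value at zs n ≤ ∫ h_{zs n} < m + ε
  have hle : EVaR P 1 X ≤ (zs n)⁻¹ *
      Real.log ((∫ ω, Real.exp (zs n * X ω) ∂P) / 1) :=
    ciInf_le hbdd ⟨zs n, hzpos n⟩
  have hlog : Real.log (∫ ω, Real.exp (zs n * X ω) ∂P)
      ≤ (∫ ω, Real.exp (zs n * X ω) ∂P) - 1 :=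
    Real.log_le_sub_one_of_pos (hgpos _ (hzpos n))
  have hint_eq : (∫ ω, (Real.exp (zs n * X ω) - 1) / zs n ∂P)
      = (zs n)⁻¹ * ((∫ ω, Real.exp (zs n * X ω) ∂P) - 1) := by
    have hfun : (fun ω => (Real.exp (zs n * X ω) - 1) / zs n)
        = fun ω => (zs n)⁻¹ * (Real.exp (zs n * X ω) - 1) := by
      funext ω; rw [div_eq_inv_mul]
    rw [hfun, integral_const_mul, integral_sub (hmgf _ (hzpos n)) (integrable_const 1),
      integral_const]
    simp
  calc EVaR P 1 X ≤ (zs n)⁻¹ * Real.log ((∫ ω, Real.exp (zs n * X ω) ∂P) / 1) := hle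
  _ ≤ (zs n)⁻¹ * ((∫ ω, Real.exp (zs n * X ω) ∂P) - 1) := by
      rw [div_one]
      exact mul_le_mul_of_nonneg_left hlog (le_of_lt (by positivity))
  _ = ∫ ω, (Real.exp (zs n * X ω) - 1) / zs n ∂P := hint_eq.symm
  _ ≤ m + ε := le_of_lt hn
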